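/- Fix S > 0. As α → 0⁺, Ĩ(α,S) = (S·α − (1/2)·(e^{2S} − 1)·α²)·log₂(e) + O(α³). -/

import Mathlib

open MeasureTheory ProbabilityTheory Real Filter Asymptotics

/-- Binary entropy function (in bits). -/
noncomputable def binEnt (p : ℝ) : ℝ :=
  -(p * Real.logb 2 p) - (1 - p) * Real.logb 2 (1 - p)

/-- `Ĩ(α, S)`: the mutual information of the binary-input additive Gaussian channel with
additive SNR `S`, a priori probabilities `α, 1-α`, and `W ~ N(0, 2S)`:
`Ĩ(α,S) = H_b(α) − α·E[log₂(1 + ((1-α)/α)·e^{W−S})] − (1-α)·E[log₂(1 + (α/(1-α))·e^{W−S})]`. -/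
noncomputable def Itilde (α S : ℝ) : ℝ :=
  binEnt α
    - α * ∫ w, Real.logb 2 (1 + ((1 - α) / α) * Real.exp (w - S))
        ∂(gaussianReal 0 (2 * S).toNNReal)
    - (1 - α) * ∫ w, Real.logb 2 (1 + (α / (1 - α)) * Real.exp (w - S))
        ∂(gaussianReal 0 (2 * S).toNNReal)

open scoped NNReal ENNReal


variable {v : ℝ≥0}

lemma gReal_eq_withDensity (hv : v ≠ 0) :
    gaussianReal 0 v
      = volume.withDensity (fun x => ((gaussianPDFReal 0 v x).toNNReal : ℝ≥0∞)) := by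
  rw [gaussianReal_of_var_ne_zero 0 hv]
  rfl

lemma integrable_gaussianReal_iff (hv : v ≠ 0) {g : ℝ → ℝ} :
    Integrable g (gaussianReal 0 v)
      ↔ Integrable (fun x => gaussianPDFReal 0 v x * g x) volume := by
  rw [gReal_eq_withDensity hv,
    integrable_withDensity_iff_integrable_smul
      ((measurable_gaussianPDFReal 0 v).real_toNNReal)]
  simp only [NNReal.smul_def, NNReal.coe_mk, smul_eq_mul]
  constructor <;> intro h <;> refine h.congr (Filter.Eventually.of_forall fun x => ?_) <;>
    simp [Real.coe_toNNReal _ (gaussianPDFReal_nonneg 0 v x)]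

lemma integral_gaussianReal_eq (hv : v ≠ 0) (g : ℝ → ℝ) :
    ∫ x, g x ∂(gaussianReal 0 v) = ∫ x, gaussianPDFReal 0 v x * g x := by
  rw [gReal_eq_withDensity hv,
    integral_withDensity_eq_integral_smul
      ((measurable_gaussianPDFReal 0 v).real_toNNReal)]
  congr 1
  ext x
  rw [NNReal.smul_def, Real.coe_toNNReal _ (gaussianPDFReal_nonneg 0 v x), smul_eq_mul]


lemma exp_mul_gaussianPDFReal (hv : v ≠ 0) (c x : ℝ) :
    rexp (c * x) * gaussianPDFReal 0 v x
      = rexp (c ^ 2 * v / 2) * gaussianPDFReal (c * v) v x := by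
  have hv' : (v : ℝ) ≠ 0 := by exact_mod_cast hv
  simp only [gaussianPDFReal]
  rw [mul_left_comm, mul_left_comm (rexp (c ^ 2 * v / 2))]
  congr 1
  rw [← Real.exp_add, ← Real.exp_add]
  congr 1
  field_simp
  ring

lemma integrable_exp_gaussianReal (hv : v ≠ 0) (c : ℝ) :
    Integrable (fun x => rexp (c * x)) (gaussianReal 0 v) := by
  rw [integrable_gaussianReal_iff hv]
  have : (fun x => gaussianPDFReal 0 v x * rexp (c * x))
      = fun x => rexp (c ^ 2 * v / 2) * gaussianPDFReal (c * v) v x := by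
    ext x; rw [mul_comm, exp_mul_gaussianPDFReal hv]
  rw [this]
  exact (integrable_gaussianPDFReal _ _).const_mul _

lemma integral_exp_gaussianReal (hv : v ≠ 0) (c : ℝ) :
    ∫ x, rexp (c * x) ∂(gaussianReal 0 v) = rexp (c ^ 2 * v / 2) := by
  rw [integral_gaussianReal_eq hv]
  have : (fun x => gaussianPDFReal 0 v x * rexp (c * x))
      = fun x => rexp (c ^ 2 * v / 2) * gaussianPDFReal (c * v) v x := by
    ext x; rw [mul_comm, exp_mul_gaussianPDFReal hv]
  rw [this, integral_const_mul, integral_gaussianPDFReal_eq_one _ hv, mul_one]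

lemma integrable_id_gaussianReal (hv : v ≠ 0) : Integrable (fun x : ℝ => x) (gaussianReal 0 v) := by
  have h : Integrable (fun x : ℝ => rexp (1 * x) + rexp ((-1) * x)) (gaussianReal 0 v) :=
    (integrable_exp_gaussianReal hv 1).add (integrable_exp_gaussianReal hv (-1))
  refine h.mono' aestronglyMeasurable_id (Filter.Eventually.of_forall fun x => ?_)
  have h1 := Real.add_one_le_exp x
  have h2 := Real.add_one_le_exp (-x)
  have h3 := Real.exp_pos x
  have h4 := Real.exp_pos (-x)
  simp only [Real.norm_eq_abs, one_mul, neg_one_mul]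
  rw [abs_le]
  constructor <;> nlinarith

lemma integral_id_gaussianReal (hv : v ≠ 0) : ∫ x, x ∂(gaussianReal 0 v) = 0 := by
  have h1 : (⟨(-1:ℝ)^2, sq_nonneg _⟩ : ℝ≥0) = 1 := by ext; norm_num
  have hmap : (gaussianReal 0 v).map (fun x => (-1:ℝ) * x) = gaussianReal 0 v := by
    rw [show (fun x => (-1:ℝ) * x) = ((-1:ℝ) * ·) from rfl, gaussianReal_map_const_mul,
      mul_zero]
    congr 1
    ext
    simp
  have h2 : ∫ x, x ∂(gaussianReal 0 v) = ∫ x, (-1:ℝ) * x ∂(gaussianReal 0 v) := by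
    conv_lhs => rw [← hmap]
    rw [integral_map (f := fun x : ℝ => x) (by fun_prop) measurable_id.aestronglyMeasurable]
  have h3 : ∫ x : ℝ, -1 * x ∂(gaussianReal 0 v) = - ∫ x : ℝ, x ∂(gaussianReal 0 v) := by
    simp_rw [neg_one_mul]
    exact integral_neg _
  rw [h3] at h2
  linarith

lemma log_quad {t : ℝ} (ht : -(1/2) ≤ t) : |Real.log (1+t) - t| ≤ 2*t^2 := by
  rcases le_or_gt t (1/2) with h | h
  · have habs : |(-t : ℝ)| ≤ 1/2 := by rw [abs_neg, abs_le]; constructor <;> linarith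
    have hser := Real.abs_log_sub_add_sum_range_le
      (x := -t) (lt_of_le_of_lt habs (by norm_num)) 1
    simp only [Finset.sum_range_one, pow_one, Nat.cast_zero, zero_add, div_one,
      sub_neg_eq_add] at hser
    have he : (-t) + Real.log (1 + t) = Real.log (1+t) - t := by ring
    rw [he] at hser
    have hd : |(-t : ℝ)| ^ 2 / (1 - |(-t : ℝ)|) ≤ 2 * t^2 := by
      rw [abs_neg, sq_abs]
      have habs' : |t| ≤ 1/2 := by rwa [abs_neg] at habs
      rw [div_le_iff₀ (by linarith)]
      nlinarith [sq_nonneg t, abs_nonneg t]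
    exact hser.trans hd
  · have h0 : (0:ℝ) < 1 + t := by linarith
    have h1 : Real.log (1+t) ≤ (1+t) - 1 := Real.log_le_sub_one_of_pos h0
    have h2 : 0 ≤ Real.log (1+t) := Real.log_nonneg (by linarith)
    rw [abs_le]
    constructor <;> nlinarith

lemma log_cubic {u : ℝ} (hu : 0 ≤ u) : |Real.log (1+u) - (u - u^2/2)| ≤ 2*u^3 := by
  rcases le_or_gt u (1/2) with h | h
  · have habs : |(-u : ℝ)| ≤ 1/2 := by rw [abs_neg, abs_le]; constructor <;> linarith
    have hser := Real.abs_log_sub_add_sum_range_le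
      (x := -u) (lt_of_le_of_lt habs (by norm_num)) 2
    have hsum : (∑ i ∈ Finset.range 2, (-u) ^ (i + 1) / (i + 1)) = -u + u^2/2 := by
      simp [Finset.sum_range_succ]
      ring
    rw [hsum, sub_neg_eq_add] at hser
    have he : (-u + u^2/2) + Real.log (1 + u) = Real.log (1+u) - (u - u^2/2) := by ring
    rw [he] at hser
    have hd : |(-u : ℝ)| ^ 3 / (1 - |(-u : ℝ)|) ≤ 2 * u^3 := by
      rw [abs_neg, abs_of_nonneg hu]
      have h1 : (1:ℝ)/2 ≤ 1 - u := by linarith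
      rw [div_le_iff₀ (by linarith)]
      nlinarith [pow_nonneg hu 3]
    exact hser.trans hd
  · have h0 : (0:ℝ) < 1 + u := by linarith
    have h1 : Real.log (1+u) ≤ (1+u) - 1 := Real.log_le_sub_one_of_pos h0
    have h2 : Real.log (1+u)⁻¹ ≤ (1+u)⁻¹ - 1 := Real.log_le_sub_one_of_pos (by positivity)
    rw [Real.log_inv] at h2
    have h3 : (1+u)⁻¹ = 1/(1+u) := by rw [one_div]
    have h4 : u/(1+u) ≤ Real.log (1+u) := by
      rw [h3] at h2
      have : 1 - 1/(1+u) = u/(1+u) := by field_simp; ring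
      linarith
    have h5 : u/(1+u) ≥ 0 := by positivity
    rw [abs_le]
    constructor
    · rw [div_le_iff₀ h0] at h4
      nlinarith [sq_nonneg u, h, h4]
    · nlinarith

lemma entropy_expand {a : ℝ} (h0 : 0 < a) (h2 : a ≤ 1/2) :
    |(-((1-a) * Real.log (1-a))) - (a - a^2/2)| ≤ 3*a^3 := by
  have habs : |a| ≤ 1/2 := by rw [abs_le]; constructor <;> linarith
  have hser := Real.abs_log_sub_add_sum_range_le
    (x := a) (lt_of_le_of_lt habs (by norm_num)) 2
  have hsum : (∑ i ∈ Finset.range 2, a ^ (i + 1) / (i + 1)) = a + a^2/2 := by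
    simp [Finset.sum_range_succ]
    ring
  rw [hsum] at hser
  have hd : |a| ^ 3 / (1 - |a|) ≤ 2 * a^3 := by
    rw [abs_of_pos h0]
    rw [div_le_iff₀ (by linarith)]
    nlinarith [pow_nonneg h0.le 3]
  have hr : |a + a^2/2 + Real.log (1-a)| ≤ 2*a^3 := hser.trans hd
  rw [abs_le] at hr ⊢
  have hlog : Real.log (1-a) = (a + a^2/2 + Real.log (1-a)) - a - a^2/2 := by ring
  rcases hr with ⟨hr1, hr2⟩
  constructor <;> [nlinarith [hlog]; nlinarith [hlog]]

section Steps

variable {S : ℝ}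

lemma vne (hS : 0 < S) : (2*S).toNNReal ≠ 0 := by
  simp only [ne_eq, Real.toNNReal_eq_zero, not_le]
  linarith

lemma integrable_exp_lin (hS : 0 < S) (c b : ℝ) :
    Integrable (fun w => rexp (c*w + b)) (gaussianReal 0 (2*S).toNNReal) := by
  have h := (integrable_exp_gaussianReal (vne hS) c).mul_const (rexp b)
  refine h.congr (Filter.Eventually.of_forall fun w => ?_)
  simp [← Real.exp_add]

lemma integral_exp_lin (hS : 0 < S) (c b : ℝ) :
    ∫ w, rexp (c*w + b) ∂(gaussianReal 0 (2*S).toNNReal) = rexp (c^2*S + b) := by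
  have hfun : (fun w => rexp (c*w + b)) = fun w => rexp (c*w) * rexp b := by
    funext w; rw [← Real.exp_add]
  rw [hfun, integral_mul_const, integral_exp_gaussianReal (vne hS),
    Real.coe_toNNReal _ (by linarith : (0:ℝ) ≤ 2*S), ← Real.exp_add]
  congr 1
  ring

lemma stepA (hS : 0 < S) {α : ℝ} (h0 : 0 < α) (h2 : α ≤ 1/2) :
    Integrable (fun w => Real.log (1 + α*(rexp (S-w) - 1))) (gaussianReal 0 (2*S).toNNReal) ∧
    |(∫ w, Real.log (1 + α*(rexp (S-w) - 1)) ∂(gaussianReal 0 (2*S).toNNReal))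
       - α*(rexp (2*S) - 1)| ≤ 2*α^2*(rexp (6*S) - 2*rexp (2*S) + 1) := by
  set μ := gaussianReal 0 (2*S).toNNReal with hμ
  have hf1 : (fun w : ℝ => rexp (S - w)) = fun w => rexp ((-1)*w + S) := by
    funext w; congr 1; ring
  have hf2 : (fun w : ℝ => rexp (2*S - 2*w)) = fun w => rexp ((-2)*w + 2*S) := by
    funext w; congr 1; ring
  have hIexp1 : Integrable (fun w : ℝ => rexp (S - w)) μ := by
    rw [hf1]; exact integrable_exp_lin hS _ _
  have hIexp2 : Integrable (fun w : ℝ => rexp (2*S - 2*w)) μ := by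
    rw [hf2]; exact integrable_exp_lin hS _ _
  have hVexp1 : ∫ w, rexp (S - w) ∂μ = rexp (2*S) := by
    rw [hf1, integral_exp_lin hS]; congr 1; ring
  have hVexp2 : ∫ w, rexp (2*S - 2*w) ∂μ = rexp (6*S) := by
    rw [hf2, integral_exp_lin hS]; congr 1; ring
  have hIt : Integrable (fun w => α*(rexp (S-w) - 1)) μ :=
    ((hIexp1.sub (integrable_const 1)).const_mul α)
  have hsq : (fun w => (α*(rexp (S-w) - 1))^2)
      = fun w => α^2 * (rexp (2*S - 2*w) - 2*rexp (S-w) + 1) := by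
    funext w
    rw [show (2*S - 2*w) = (S-w) + (S-w) by ring, Real.exp_add]
    ring
  have hIt2 : Integrable (fun w => (α*(rexp (S-w) - 1))^2) μ := by
    rw [hsq]
    exact (((hIexp2.sub (hIexp1.const_mul 2)).add (integrable_const 1)).const_mul _)
  have htge : ∀ w : ℝ, -(1/2) ≤ α*(rexp (S-w) - 1) := by
    intro w
    have := Real.exp_pos (S - w)
    nlinarith
  have hmeas : AEStronglyMeasurable (fun w => Real.log (1 + α*(rexp (S-w) - 1))) μ :=
    (Real.measurable_log.comp (by fun_prop)).aestronglyMeasurable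
  have hIlog : Integrable (fun w => Real.log (1 + α*(rexp (S-w) - 1))) μ := by
    refine (hIt.abs.add (hIt2.const_mul 2)).mono' hmeas
      (Filter.Eventually.of_forall fun w => ?_)
    have hq := log_quad (htge w)
    have : |Real.log (1 + α*(rexp (S-w) - 1))|
        ≤ |Real.log (1 + α*(rexp (S-w) - 1)) - α*(rexp (S-w) - 1)| + |α*(rexp (S-w) - 1)| := by
      calc |Real.log (1 + α*(rexp (S-w) - 1))|
          = |(Real.log (1 + α*(rexp (S-w) - 1)) - α*(rexp (S-w) - 1)) + α*(rexp (S-w) - 1)| := by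
            ring_nf
        _ ≤ _ := abs_add_le _ _
    simp only [Real.norm_eq_abs, Pi.add_apply]
    calc |Real.log (1 + α*(rexp (S-w) - 1))|
        ≤ 2*(α*(rexp (S-w) - 1))^2 + |α*(rexp (S-w) - 1)| := by
          refine this.trans ?_; gcongr
      _ = |α*(rexp (S-w) - 1)| + 2*(α*(rexp (S-w) - 1))^2 := by ring
  refine ⟨hIlog, ?_⟩
  have hVt : ∫ w, α*(rexp (S-w) - 1) ∂μ = α*(rexp (2*S) - 1) := by
    rw [integral_const_mul, integral_sub hIexp1 (integrable_const 1), hVexp1,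
      integral_const]
    simp
  have hVt2 : ∫ w, (α*(rexp (S-w) - 1))^2 ∂μ
      = α^2*(rexp (6*S) - 2*rexp (2*S) + 1) := by
    have hsub2 : Integrable (fun a => rexp (2*S-2*a) - 2*rexp (S-a)) μ :=
      hIexp2.sub (hIexp1.const_mul 2)
    rw [hsq, integral_const_mul, integral_add hsub2 (integrable_const 1),
      integral_sub hIexp2 (hIexp1.const_mul 2), hVexp2,
      integral_const_mul, hVexp1, integral_const]
    simp
  rw [← hVt, ← integral_sub hIlog hIt]
  calc |∫ w, (Real.log (1 + α*(rexp (S-w) - 1)) - α*(rexp (S-w) - 1)) ∂μ|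
      ≤ ∫ w, |Real.log (1 + α*(rexp (S-w) - 1)) - α*(rexp (S-w) - 1)| ∂μ := by
        simpa [Real.norm_eq_abs] using
          norm_integral_le_integral_norm (μ := μ)
            (fun w => Real.log (1 + α*(rexp (S-w) - 1)) - α*(rexp (S-w) - 1))
    _ ≤ ∫ w, 2*(α*(rexp (S-w) - 1))^2 ∂μ := by
        refine integral_mono (hIlog.sub hIt).abs (hIt2.const_mul 2) fun w => ?_
        exact log_quad (htge w)
    _ = 2*α^2*(rexp (6*S) - 2*rexp (2*S) + 1) := by
        rw [integral_const_mul, hVt2]; ring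

lemma stepB (hS : 0 < S) {α : ℝ} (h0 : 0 < α) (h1 : α < 1) :
    Integrable (fun w => Real.log (1 + (α/(1-α))*rexp (w-S))) (gaussianReal 0 (2*S).toNNReal) ∧
    |(∫ w, Real.log (1 + (α/(1-α))*rexp (w-S)) ∂(gaussianReal 0 (2*S).toNNReal))
       - ((α/(1-α)) - (α/(1-α))^2 * rexp (2*S)/2)| ≤ 2*(α/(1-α))^3 * rexp (6*S) := by
  set μ := gaussianReal 0 (2*S).toNNReal with hμ
  set q := α/(1-α) with hqdef
  have hq0 : 0 ≤ q := by
    apply div_nonneg h0.le; linarith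
  have hf1 : (fun w : ℝ => rexp (w - S)) = fun w => rexp (1*w + (-S)) := by
    funext w; congr 1; ring
  have hf2 : (fun w : ℝ => rexp (2*w - 2*S)) = fun w => rexp (2*w + (-(2*S))) := by
    funext w; congr 1
  have hf3 : (fun w : ℝ => rexp (3*w - 3*S)) = fun w => rexp (3*w + (-(3*S))) := by
    funext w; congr 1
  have hIexp1 : Integrable (fun w : ℝ => rexp (w - S)) μ := by
    rw [hf1]; exact integrable_exp_lin hS _ _
  have hIexp2 : Integrable (fun w : ℝ => rexp (2*w - 2*S)) μ := by
    rw [hf2]; exact integrable_exp_lin hS _ _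
  have hIexp3 : Integrable (fun w : ℝ => rexp (3*w - 3*S)) μ := by
    rw [hf3]; exact integrable_exp_lin hS _ _
  have hVexp1 : ∫ w, rexp (w - S) ∂μ = 1 := by
    rw [hf1, integral_exp_lin hS, show 1^2*S + -S = 0 by ring, Real.exp_zero]
  have hVexp2 : ∫ w, rexp (2*w - 2*S) ∂μ = rexp (2*S) := by
    rw [hf2, integral_exp_lin hS]; congr 1; ring
  have hVexp3 : ∫ w, rexp (3*w - 3*S) ∂μ = rexp (6*S) := by
    rw [hf3, integral_exp_lin hS]; congr 1; ring
  have hsq : (fun w => (q*rexp (w-S))^2) = fun w => q^2 * rexp (2*w - 2*S) := by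
    funext w
    rw [show 2*w - 2*S = (w-S) + (w-S) by ring, Real.exp_add]
    ring
  have hcb : (fun w => (q*rexp (w-S))^3) = fun w => q^3 * rexp (3*w - 3*S) := by
    funext w
    rw [show 3*w - 3*S = (w-S) + ((w-S) + (w-S)) by ring, Real.exp_add, Real.exp_add]
    ring
  have hIu : Integrable (fun w => q*rexp (w-S)) μ := hIexp1.const_mul q
  have hIu2 : Integrable (fun w => (q*rexp (w-S))^2) μ := by
    rw [hsq]; exact hIexp2.const_mul _
  have hIu3 : Integrable (fun w => (q*rexp (w-S))^3) μ := by
    rw [hcb]; exact hIexp3.const_mul _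
  have huge : ∀ w : ℝ, 0 ≤ q*rexp (w-S) := fun w => mul_nonneg hq0 (Real.exp_pos _).le
  have hmeas : AEStronglyMeasurable (fun w => Real.log (1 + q*rexp (w-S))) μ :=
    (Real.measurable_log.comp (by fun_prop)).aestronglyMeasurable
  have hIquad : Integrable (fun w => q*rexp (w-S) - (q*rexp (w-S))^2/2) μ :=
    hIu.sub (hIu2.div_const 2)
  have hIlog : Integrable (fun w => Real.log (1 + q*rexp (w-S))) μ := by
    refine ((hIu.add (hIu2.div_const 2)).add (hIu3.const_mul 2)).mono' hmeas
      (Filter.Eventually.of_forall fun w => ?_)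
    have hc := log_cubic (huge w)
    have htri : |Real.log (1 + q*rexp (w-S))|
        ≤ |Real.log (1 + q*rexp (w-S)) - (q*rexp (w-S) - (q*rexp (w-S))^2/2)|
          + |q*rexp (w-S) - (q*rexp (w-S))^2/2| := by
      calc |Real.log (1 + q*rexp (w-S))|
          = |(Real.log (1 + q*rexp (w-S)) - (q*rexp (w-S) - (q*rexp (w-S))^2/2))
              + (q*rexp (w-S) - (q*rexp (w-S))^2/2)| := by ring_nf
        _ ≤ _ := abs_add_le _ _
    have habs2 : |q*rexp (w-S) - (q*rexp (w-S))^2/2| ≤ q*rexp (w-S) + (q*rexp (w-S))^2/2 := by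
      rw [abs_le]
      constructor <;> nlinarith [huge w, sq_nonneg (q*rexp (w-S))]
    simp only [Real.norm_eq_abs, Pi.add_apply]
    calc |Real.log (1 + q*rexp (w-S))|
        ≤ 2*(q*rexp (w-S))^3 + (q*rexp (w-S) + (q*rexp (w-S))^2/2) := by
          refine htri.trans ?_; gcongr
      _ = q*rexp (w-S) + (q*rexp (w-S))^2/2 + 2*(q*rexp (w-S))^3 := by ring
  refine ⟨hIlog, ?_⟩
  have hVu : ∫ w, q*rexp (w-S) ∂μ = q := by
    rw [integral_const_mul, hVexp1, mul_one]
  have hVu2 : ∫ w, (q*rexp (w-S))^2 ∂μ = q^2 * rexp (2*S) := by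
    rw [hsq, integral_const_mul, hVexp2]
  have hVu3 : ∫ w, (q*rexp (w-S))^3 ∂μ = q^3 * rexp (6*S) := by
    rw [hcb, integral_const_mul, hVexp3]
  have hVquad : ∫ w, (q*rexp (w-S) - (q*rexp (w-S))^2/2) ∂μ = q - q^2 * rexp (2*S)/2 := by
    rw [integral_sub hIu (hIu2.div_const 2), integral_div, hVu, hVu2]
  rw [← hVquad, ← integral_sub hIlog hIquad]
  calc |∫ w, (Real.log (1 + q*rexp (w-S)) - (q*rexp (w-S) - (q*rexp (w-S))^2/2)) ∂μ|
      ≤ ∫ w, |Real.log (1 + q*rexp (w-S)) - (q*rexp (w-S) - (q*rexp (w-S))^2/2)| ∂μ := by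
        exact
          norm_integral_le_integral_norm (μ := μ)
            (fun w => Real.log (1 + q*rexp (w-S)) - (q*rexp (w-S) - (q*rexp (w-S))^2/2))
    _ ≤ ∫ w, 2*(q*rexp (w-S))^3 ∂μ := by
        refine integral_mono (hIlog.sub hIquad).abs (hIu3.const_mul 2) fun w => ?_
        exact log_cubic (huge w)
    _ = 2*q^3 * rexp (6*S) := by
        rw [integral_const_mul, hVu3]; ring

lemma Itilde_eq (hS : 0 < S) {α : ℝ} (h0 : 0 < α) (h2 : α ≤ 1/2) :
    Itilde α S =
      (S*α - α * (∫ w, Real.log (1 + α*(rexp (S-w) - 1)) ∂(gaussianReal 0 (2*S).toNNReal))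
        - (1-α) * Real.log (1-α)
        - (1-α) * (∫ w, Real.log (1 + (α/(1-α))*rexp (w-S)) ∂(gaussianReal 0 (2*S).toNNReal)))
      / Real.log 2 := by
  set μ := gaussianReal 0 (2*S).toNNReal with hμ
  have h1 : α < 1 := by linarith
  have h1α : (0:ℝ) < 1 - α := by linarith
  have hlog2 : Real.log 2 ≠ 0 := by
    have := Real.log_pos (by norm_num : (1:ℝ) < 2); linarith
  -- pointwise identity for the first integrand
  have hpoint : ∀ w : ℝ, Real.log (1 + ((1-α)/α)*rexp (w-S))
      = (w - (S + Real.log α)) + Real.log (1 + α*(rexp (S-w) - 1)) := by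
    intro w
    have hee : rexp (w-S) * rexp (S-w) = 1 := by
      rw [← Real.exp_add, show (w-S) + (S-w) = 0 by ring, Real.exp_zero]
    have hpos2 : 0 < 1 + α*(rexp (S-w) - 1) := by
      nlinarith [Real.exp_pos (S-w)]
    have key : 1 + ((1-α)/α)*rexp (w-S) = (rexp (w-S)/α) * (1 + α*(rexp (S-w) - 1)) := by
      field_simp
      nlinarith [hee]
    rw [key, Real.log_mul (by positivity) (ne_of_gt hpos2),
      Real.log_div (Real.exp_ne_zero _) (ne_of_gt h0), Real.log_exp]
    ring
  -- first integral in natural logs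
  have hIlin : Integrable (fun w : ℝ => w - (S + Real.log α)) μ :=
    (integrable_id_gaussianReal (vne hS)).sub (integrable_const _)
  have hIlogA := (stepA hS h0 h2).1
  have hInt1 : ∫ w, Real.log (1 + ((1-α)/α)*rexp (w-S)) ∂μ
      = -(S + Real.log α)
        + ∫ w, Real.log (1 + α*(rexp (S-w) - 1)) ∂μ := by
    have : (fun w => Real.log (1 + ((1-α)/α)*rexp (w-S)))
        = fun w => (w - (S + Real.log α)) + Real.log (1 + α*(rexp (S-w) - 1)) := by
      funext w; exact hpoint w
    rw [this, integral_add hIlin hIlogA,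
      integral_sub (integrable_id_gaussianReal (vne hS)) (integrable_const _),
      integral_id_gaussianReal (vne hS), integral_const]
    simp
  -- logb to log for integrals
  have hlb1 : ∫ w, Real.logb 2 (1 + ((1-α)/α)*rexp (w-S)) ∂μ
      = (∫ w, Real.log (1 + ((1-α)/α)*rexp (w-S)) ∂μ) / Real.log 2 := by
    simp_rw [Real.logb]
    exact integral_div _ _
  have hlb2 : ∫ w, Real.logb 2 (1 + (α/(1-α))*rexp (w-S)) ∂μ
      = (∫ w, Real.log (1 + (α/(1-α))*rexp (w-S)) ∂μ) / Real.log 2 := by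
    simp_rw [Real.logb]
    exact integral_div _ _
  have hbe : binEnt α = (-(α * Real.log α) - (1-α) * Real.log (1-α)) / Real.log 2 := by
    simp only [binEnt, Real.logb]
    ring
  rw [Itilde, hμ.symm, hlb1, hlb2, hInt1, hbe]
  field_simp
  ring
end Steps


lemma habsN_aux {α q E2 E6 rA rB rL : ℝ} (h0 : 0 < α) (h2 : α ≤ 1/2)
    (h1α : 0 < 1 - α)
    (hq0 : 0 ≤ q) (hq2 : q ≤ 2*α)
    (hE2pos : 0 < E2) (hE6pos : 0 < E6)
    (hbA : |rA| ≤ 2*α^2*(E6 - 2*E2 + 1)) (hbB : |rB| ≤ 2*q^3*E6) (hbL : |rL| ≤ 3*α^3)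
    (hC1 : 0 ≤ E6 - 2*E2 + 1) :
    |α^2*q*E2/2 - α*rA + rL - (1-α)*rB| ≤ (E2 + 2*(E6 - 2*E2 + 1) + 3 + 16*E6) * α^3 := by
  have hq3 : q^3 ≤ 8*α^3 := by
    calc q^3 ≤ (2*α)^3 := pow_le_pow_left₀ hq0 hq2 3
      _ = 8*α^3 := by ring
  rw [abs_le] at hbA hbB hbL
  obtain ⟨hbA1, hbA2⟩ := hbA
  obtain ⟨hbB1, hbB2⟩ := hbB
  obtain ⟨hbL1, hbL2⟩ := hbL
  have hq3E : 2*q^3*E6 ≤ 16*α^3*E6 := by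
    have := mul_le_mul_of_nonneg_right hq3 hE6pos.le
    nlinarith
  have hq3E0 : 0 ≤ 2*q^3*E6 := by positivity
  have hm1 : α*rA ≤ 2*α^3*(E6 - 2*E2 + 1) := by
    calc α*rA ≤ α*(2*α^2*(E6 - 2*E2 + 1)) := mul_le_mul_of_nonneg_left hbA2 h0.le
      _ = 2*α^3*(E6 - 2*E2 + 1) := by ring
  have hm2 : -(2*α^3*(E6 - 2*E2 + 1)) ≤ α*rA := by
    calc -(2*α^3*(E6 - 2*E2 + 1)) = α*(-(2*α^2*(E6 - 2*E2 + 1))) := by ring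
      _ ≤ α*rA := mul_le_mul_of_nonneg_left hbA1 h0.le
  have hm3 : (1-α)*rB ≤ 16*α^3*E6 := by
    calc (1-α)*rB ≤ (1-α)*(2*q^3*E6) := mul_le_mul_of_nonneg_left hbB2 h1α.le
      _ ≤ 2*q^3*E6 := mul_le_of_le_one_left hq3E0 (by linarith)
      _ ≤ 16*α^3*E6 := hq3E
  have hm4 : -(16*α^3*E6) ≤ (1-α)*rB := by
    have hstep : (1-α)*(-(2*q^3*E6)) ≤ (1-α)*rB := mul_le_mul_of_nonneg_left hbB1 h1α.le
    have hstep2 : -(2*q^3*E6) ≤ (1-α)*(-(2*q^3*E6)) := by nlinarith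
    linarith
  have hm5 : α^2*q*E2/2 ≤ α^3*E2 := by
    have := mul_le_mul_of_nonneg_right (mul_le_mul_of_nonneg_left hq2 (sq_nonneg α)) hE2pos.le
    nlinarith
  have hm6 : 0 ≤ α^2*q*E2/2 := by positivity
  rw [abs_le]
  constructor <;> nlinarith [hm1, hm2, hm3, hm4, hm5, hm6, hbL1, hbL2]

variable {S : ℝ}
lemma master (hS : 0 < S) {α : ℝ} (h0 : 0 < α) (h2 : α ≤ 1/2) :
    |Itilde α S - (S*α - (1/2)*(rexp (2*S) - 1)*α^2) * Real.logb 2 (rexp 1)|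
      ≤ ((rexp (2*S) + 2*(rexp (6*S) - 2*rexp (2*S) + 1) + 3 + 16*rexp (6*S))
          / Real.log 2) * α^3 := by
  set μ := gaussianReal 0 (2*S).toNNReal with hμ
  have h1 : α < 1 := by linarith
  have h1α : (0:ℝ) < 1 - α := by linarith
  have hlog2 : 0 < Real.log 2 := Real.log_pos (by norm_num)
  set E2 := rexp (2*S) with hE2
  set E6 := rexp (6*S) with hE6
  have hE2pos : 0 < E2 := Real.exp_pos _
  have hE6pos : 0 < E6 := Real.exp_pos _
  set A := ∫ w, Real.log (1 + α*(rexp (S-w) - 1)) ∂μ with hA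
  set B := ∫ w, Real.log (1 + (α/(1-α))*rexp (w-S)) ∂μ with hB
  set L := Real.log (1-α) with hL
  set q := α/(1-α) with hq
  have hq0 : 0 ≤ q := div_nonneg h0.le h1α.le
  have hq2 : q ≤ 2*α := by
    rw [hq, div_le_iff₀ h1α]
    nlinarith
  set rA := A - α*(E2 - 1) with hrA
  set rB := B - (q - q^2*E2/2) with hrB
  set rL := (-((1-α) * L)) - (α - α^2/2) with hrL
  have hbA : |rA| ≤ 2*α^2*(E6 - 2*E2 + 1) := (stepA hS h0 h2).2
  have hbB : |rB| ≤ 2*q^3*E6 := (stepB hS h0 h1).2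
  have hbL : |rL| ≤ 3*α^3 := entropy_expand h0 h2
  have hC1 : 0 ≤ E6 - 2*E2 + 1 := by
    have he3 : rexp (3*S) * rexp (3*S) = E6 := by
      rw [← Real.exp_add, show 3*S + 3*S = 6*S by ring]
    have hmono : E2 ≤ rexp (3*S) := Real.exp_le_exp.2 (by linarith)
    nlinarith [sq_nonneg (rexp (3*S) - 1)]
  have hlbe : Real.logb 2 (rexp 1) = 1 / Real.log 2 := by
    rw [Real.logb, Real.log_exp]
  have hIt := Itilde_eq hS h0 h2
  rw [← hμ] at hIt
  -- numerator identity
  set N := S*α - α*A - (1-α)*L - (1-α)*B - (S*α - (1/2)*(E2 - 1)*α^2) with hN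
  have hdiff : Itilde α S - (S*α - (1/2)*(E2 - 1)*α^2) * Real.logb 2 (rexp 1)
      = N / Real.log 2 := by
    rw [hIt, hlbe, hN]
    ring
  have hNid : N = α^2*q*E2/2 - α*rA + rL - (1-α)*rB := by
    rw [hN, hrA, hrB, hrL, hq]
    field_simp
    ring
  clear_value N rA rB rL q L A B E2 E6
  have habsN : |N| ≤ (E2 + 2*(E6 - 2*E2 + 1) + 3 + 16*E6) * α^3 := by
    rw [hNid]
    exact habsN_aux h0 h2 h1α hq0 hq2 hE2pos hE6pos hbA hbB hbL hC1
  rw [hdiff, abs_div, abs_of_pos hlog2, div_le_iff₀ hlog2]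
  calc |N| ≤ (E2 + 2*(E6 - 2*E2 + 1) + 3 + 16*E6) * α^3 := habsN
    _ = (E2 + 2*(E6 - 2*E2 + 1) + 3 + 16*E6) / Real.log 2 * α^3 * Real.log 2 := by
      field_simp
  



/-- As `α → 0⁺`, `Ĩ(α,S) = (S·α − (1/2)(e^{2S} − 1)α²)·log₂ e + O(α³)`. -/
theorem stmt11 (S : ℝ) (hS : 0 < S) :
    (fun α : ℝ => Itilde α S
        - (S * α - (1 / 2) * (Real.exp (2 * S) - 1) * α ^ 2) * Real.logb 2 (Real.exp 1))
      =O[nhdsWithin 0 (Set.Ioi 0)] fun α : ℝ => α ^ 3 := by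
  rw [Asymptotics.isBigO_iff]
  refine ⟨(rexp (2*S) + 2*(rexp (6*S) - 2*rexp (2*S) + 1) + 3 + 16*rexp (6*S))
    / Real.log 2, ?_⟩
  filter_upwards [Ioo_mem_nhdsGT_of_mem (by norm_num : (0:ℝ) ∈ Set.Ico 0 (1/2))] with α hα
  obtain ⟨h0, hlt⟩ := hα
  have hm := master hS h0 hlt.le
  rw [Real.norm_eq_abs, Real.norm_eq_abs, abs_of_pos (pow_pos h0 3)]
  calc |Itilde α S - (S * α - (1 / 2) * (Real.exp (2 * S) - 1) * α ^ 2) * Real.logb 2 (Real.exp 1)|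
      ≤ ((rexp (2*S) + 2*(rexp (6*S) - 2*rexp (2*S) + 1) + 3 + 16*rexp (6*S))
          / Real.log 2) * α^3 := hm
    _ = _ := by ring
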